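/- Let h be a holomorphic function on an open subset of ℂⁿ. Then for any critical point c of h, the real Hessian of Re h at c, viewed as a symmetric bilinear form B on ℝ^{2n}, satisfies B(iv, iv) = -B(v, v) for all v ∈ ℂⁿ, where i denotes multiplication by √-1. Consequently, if B is nondegenerate then its signature is zero. -/

import Mathlib

open Module ContinuousLinearMap

section alg
variable {E : Type*} [AddCommGroup E] [Module ℝ E] [FiniteDimensional ℝ E]

omit [FiniteDimensional ℝ E] in
lemma bilin_diag_sum {ι : Type*} [Fintype ι] (b : LinearMap.BilinForm ℝ E)
    (v : Basis ι ℝ E) (hv : b.IsOrthoᵢ v) (x : E) :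
    b x x = ∑ i, (v.repr x i)^2 * b (v i) (v i) := by
  conv_lhs => rw [← v.sum_repr x]
  simp only [map_sum, map_smul, LinearMap.sum_apply, LinearMap.smul_apply, smul_eq_mul]
  refine Finset.sum_congr rfl fun i _ => ?_
  rw [Finset.sum_eq_single i]
  · ring
  · intro j _ hj
    rw [LinearMap.isOrthoᵢ_def.mp hv j i hj, mul_zero]
  · intro hi; exact absurd (Finset.mem_univ i) hi

omit [FiniteDimensional ℝ E] in
lemma posdef_span {ι : Type*} [Fintype ι] (b : LinearMap.BilinForm ℝ E)
    (v : Basis ι ℝ E) (hv : b.IsOrthoᵢ v) (S : Set ι)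
    (hS : ∀ i ∈ S, 0 < b (v i) (v i)) :
    ∀ x ∈ Submodule.span ℝ (v '' S), x ≠ 0 → 0 < b x x := by
  intro x hx hx0
  have hsupp : ↑(v.repr x).support ⊆ S := v.mem_span_image.mp hx
  rw [bilin_diag_sum b v hv x]
  have hnn : ∀ i ∈ Finset.univ (α := ι), 0 ≤ (v.repr x i)^2 * b (v i) (v i) := by
    intro i _
    by_cases hi : v.repr x i = 0
    · simp [hi]
    · have hiS : i ∈ S := hsupp (Finsupp.mem_support_iff.mpr hi)
      have := hS i hiS
      positivity
  have hex : ∃ i ∈ Finset.univ (α := ι), 0 < (v.repr x i)^2 * b (v i) (v i) := by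
    have : v.repr x ≠ 0 := fun h => hx0 (by simpa using congrArg v.repr.symm h)
    obtain ⟨i, hi⟩ := Finsupp.ne_iff.mp this
    simp only [Finsupp.coe_zero, Pi.zero_apply] at hi
    have hiS : i ∈ S := hsupp (Finsupp.mem_support_iff.mpr hi)
    have := hS i hiS
    exact ⟨i, Finset.mem_univ i, by positivity⟩
  obtain ⟨i, hi, hpos⟩ := hex
  exact Finset.sum_pos' hnn ⟨i, hi, hpos⟩

omit [FiniteDimensional ℝ E] in
lemma diag_ne_zero {ι : Type*} [Fintype ι] (b : LinearMap.BilinForm ℝ E)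
    (v : Basis ι ℝ E) (hv : b.IsOrthoᵢ v)
    (hnd : ∀ x : E, (∀ w, b x w = 0) → x = 0) (i : ι) :
    b (v i) (v i) ≠ 0 := by
  intro h0
  refine v.ne_zero i (hnd (v i) fun w => ?_)
  conv_lhs => rw [← v.sum_repr w]
  rw [map_sum]
  refine Finset.sum_eq_zero fun j _ => ?_
  rw [map_smul, smul_eq_mul]
  by_cases hij : j = i
  · rw [hij, h0, mul_zero]
  · rw [LinearMap.isOrthoᵢ_def.mp hv i j (Ne.symm hij), mul_zero]

lemma signature_zero_of_anti (b : LinearMap.BilinForm ℝ E) (hsymm : ∀ x y, b x y = b y x)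
    (J : E ≃ₗ[ℝ] E) (hJ : ∀ x, b (J x) (J x) = - b x x)
    (hnd : ∀ x : E, (∀ w, b x w = 0) → x = 0) :
    ∃ P N : Submodule ℝ E, IsCompl P N ∧
      (∀ x ∈ P, x ≠ 0 → 0 < b x x) ∧ (∀ x ∈ N, x ≠ 0 → b x x < 0) ∧
      finrank ℝ P = finrank ℝ N := by
  have hbsymm : LinearMap.IsSymm b := ⟨fun x y => by simpa using hsymm x y⟩
  obtain ⟨v, hv⟩ := LinearMap.BilinForm.exists_orthogonal_basis hbsymm
  set S : Set (Fin (finrank ℝ E)) := {i | 0 < b (v i) (v i)} with hS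
  set P := Submodule.span ℝ (v '' S) with hP
  set N := Submodule.span ℝ (v '' Sᶜ) with hN
  have hdiag := diag_ne_zero b v hv hnd
  have hSneg : ∀ i ∈ Sᶜ, b (v i) (v i) < 0 := fun i hi =>
    lt_of_le_of_ne (not_lt.mp hi) (hdiag i)
  have hPpos : ∀ x ∈ P, x ≠ 0 → 0 < b x x := posdef_span b v hv S (fun i hi => hi)
  have hNneg : ∀ x ∈ N, x ≠ 0 → b x x < 0 := by
    have hv' : (-b).IsOrthoᵢ v := by
      rw [LinearMap.isOrthoᵢ_def]
      intro i j hij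
      simp [LinearMap.isOrthoᵢ_def.mp hv i j hij]
    have := posdef_span (-b) v hv' Sᶜ (fun i hi => by
      simpa using hSneg i hi)
    intro x hx hx0
    have h := this x hx hx0
    simp only [LinearMap.neg_apply, Pi.neg_apply] at h
    linarith [h]
  have hcompl : IsCompl P N := by
    constructor
    · rw [disjoint_iff_inf_le]
      intro x hx
      obtain ⟨hxP, hxN⟩ := Submodule.mem_inf.mp hx
      have h1 := v.mem_span_image.mp hxP
      have h2 := v.mem_span_image.mp hxN
      have hrepr : v.repr x = 0 := by
        ext i
        by_contra hi
        have hmem : i ∈ (v.repr x).support := Finsupp.mem_support_iff.mpr hi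
        exact (h2 hmem) (h1 hmem)
      have : x = 0 := by
        have := congrArg v.repr.symm hrepr
        simpa using this
      simp [this]
    · rw [codisjoint_iff]
      rw [hP, hN, ← Submodule.span_union, ← Set.image_union, Set.union_compl_self,
        Set.image_univ, v.span_eq]
  have hmapJ : ∀ (Q : Submodule ℝ E), finrank ℝ (Q.map (J : E →ₗ[ℝ] E)) = finrank ℝ Q :=
    fun Q => LinearEquiv.finrank_map_eq J Q
  have hd1 : Disjoint (P.map (J : E →ₗ[ℝ] E)) P := by
    rw [disjoint_iff_inf_le]
    intro x hx
    obtain ⟨hx1, hx2⟩ := Submodule.mem_inf.mp hx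
    by_contra hx0
    have hx0' : x ≠ 0 := fun h => hx0 (by simp [h])
    obtain ⟨y, hyP, hyx⟩ := Submodule.mem_map.mp hx1
    have hy0 : y ≠ 0 := fun h => hx0' (by simp [← hyx, h])
    have hneg : b x x < 0 := by
      rw [show (J : E →ₗ[ℝ] E) y = J y from rfl] at hyx
      rw [← hyx]
      have hpos := hPpos y hyP hy0
      rw [hJ y]
      linarith
    exact absurd (hPpos x hx2 hx0') (by linarith)
  have hd2 : Disjoint (N.map (J : E →ₗ[ℝ] E)) N := by
    rw [disjoint_iff_inf_le]
    intro x hx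
    obtain ⟨hx1, hx2⟩ := Submodule.mem_inf.mp hx
    by_contra hx0
    have hx0' : x ≠ 0 := fun h => hx0 (by simp [h])
    obtain ⟨y, hyN, hyx⟩ := Submodule.mem_map.mp hx1
    have hy0 : y ≠ 0 := fun h => hx0' (by simp [← hyx, h])
    have hpos : 0 < b x x := by
      rw [show (J : E →ₗ[ℝ] E) y = J y from rfl] at hyx
      rw [← hyx]
      have hneg := hNneg y hyN hy0
      rw [hJ y]
      linarith
    exact absurd (hNneg x hx2 hx0') (by linarith)
  have hfull : finrank ℝ P + finrank ℝ N = finrank ℝ E :=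
    Submodule.finrank_add_eq_of_isCompl hcompl
  have hle1 : finrank ℝ (P.map (J : E →ₗ[ℝ] E)) + finrank ℝ P ≤ finrank ℝ E :=
    Submodule.finrank_add_finrank_le_of_disjoint hd1
  have hle2 : finrank ℝ (N.map (J : E →ₗ[ℝ] E)) + finrank ℝ N ≤ finrank ℝ E :=
    Submodule.finrank_add_finrank_le_of_disjoint hd2
  rw [hmapJ] at hle1 hle2
  exact ⟨P, N, hcompl, hPpos, hNneg, by omega⟩
end alg

section ana
variable {E : Type*} [NormedAddCommGroup E] [NormedSpace ℂ E]

/-- multiplication by `I` as a real continuous linear map -/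
noncomputable def JcL (E : Type*) [NormedAddCommGroup E] [NormedSpace ℂ E] : E →L[ℝ] E :=
  (Complex.I • ContinuousLinearMap.id ℂ E).restrictScalars ℝ

@[simp] lemma JcL_apply (w : E) : JcL E w = Complex.I • w := rfl

/-- multiplication by `I` as a real linear equivalence -/
noncomputable def JEquiv (E : Type*) [AddCommGroup E] [Module ℂ E] : E ≃ₗ[ℝ] E where
  toFun v := Complex.I • v
  invFun v := (-Complex.I) • v
  map_add' := smul_add _
  map_smul' r v := (smul_comm Complex.I r v).symm ▸ rfl
  left_inv v := by show -Complex.I • Complex.I • v = v; rw [smul_smul]; norm_num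
  right_inv v := by show Complex.I • -Complex.I • v = v; rw [smul_smul]; norm_num

@[simp] lemma JEquiv_apply {E : Type*} [AddCommGroup E] [Module ℂ E] (v : E) :
    JEquiv E v = Complex.I • v := rfl

/-- the operator sending a real functional `u` to `w ↦ u w - I * u (I • w)` -/
noncomputable def SrL (E : Type*) [NormedAddCommGroup E] [NormedSpace ℂ E] :
    (E →L[ℝ] ℝ) →L[ℝ] (E →L[ℝ] ℂ) :=
  (ContinuousLinearMap.compL ℝ E ℝ ℂ Complex.ofRealCLM) -
    Complex.I • ((ContinuousLinearMap.compL ℝ E ℝ ℂ Complex.ofRealCLM).comp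
      ((ContinuousLinearMap.compL ℝ E E ℝ).flip (JcL E)))

lemma SrL_apply (u : E →L[ℝ] ℝ) (w : E) :
    SrL E u w = (u w : ℂ) - Complex.I * (u (Complex.I • w) : ℂ) := by
  simp [SrL, smul_eq_mul]

lemma SrL_smul_I (u : E →L[ℝ] ℝ) (w : E) :
    SrL E u (Complex.I • w) = Complex.I * SrL E u w := by
  rw [SrL_apply, SrL_apply]
  have h1 : Complex.I • Complex.I • w = -w := by
    rw [smul_smul, Complex.I_mul_I, neg_one_smul]
  rw [h1, map_neg]
  push_cast
  ring_nf
  rw [Complex.I_sq]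
  ring

end ana

theorem main_analysis {n : ℕ}
    {U : Set (EuclideanSpace ℂ (Fin n))} (hU : IsOpen U)
    {h : EuclideanSpace ℂ (Fin n) → ℂ} (hh : DifferentiableOn ℂ h U)
    {c : EuclideanSpace ℂ (Fin n)} (hc : c ∈ U)
    (hD : DifferentiableAt ℝ (fderiv ℝ (fun z => (h z).re)) c) :
    (∀ v w, fderiv ℝ (fderiv ℝ (fun z => (h z).re)) c v w =
        (fderiv ℝ (fderiv ℝ h) c v w).re) ∧
    (∀ v w, fderiv ℝ (fderiv ℝ h) c v (Complex.I • w) =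
        Complex.I * fderiv ℝ (fderiv ℝ h) c v w) ∧
    (∀ v w, fderiv ℝ (fderiv ℝ h) c v w = fderiv ℝ (fderiv ℝ h) c w v) := by
  set f : EuclideanSpace ℂ (Fin n) → ℝ := fun z => (h z).re with hf
  set g := fderiv ℝ f with hg
  have hmem : U ∈ nhds c := hU.mem_nhds hc
  have hdiff : ∀ z ∈ U, DifferentiableAt ℂ h z := fun z hz =>
    hh.differentiableAt (hU.mem_nhds hz)
  have hgf : ∀ z ∈ U, g z = Complex.reCLM.comp (fderiv ℝ h z) := by
    intro z hz
    have hd := (hdiff z hz).restrictScalars ℝ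
    exact (Complex.reCLM.hasFDerivAt.comp z hd.hasFDerivAt).fderiv
  have chev : ∀ z ∈ U, fderiv ℝ h z = SrL (EuclideanSpace ℂ (Fin n)) (g z) := by
    intro z hz
    have hd := (hdiff z hz).restrictScalars ℝ
    have hres : fderiv ℝ h z = (fderiv ℂ h z).restrictScalars ℝ :=
      (hdiff z hz).fderiv_restrictScalars ℝ
    ext w
    have hsm : fderiv ℝ h z (Complex.I • w) = Complex.I * fderiv ℝ h z w := by
      rw [hres]
      simp only [ContinuousLinearMap.coe_restrictScalars']
      rw [map_smul, smul_eq_mul]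
    rw [SrL_apply, hgf z hz]
    simp only [ContinuousLinearMap.coe_comp', Function.comp_apply, Complex.reCLM_apply]
    rw [hsm]
    set ζ := fderiv ℝ h z w
    apply Complex.ext <;> simp [Complex.mul_re, Complex.mul_im]
  have hevg : fderiv ℝ h =ᶠ[nhds c] fun z => SrL (EuclideanSpace ℂ (Fin n)) (g z) :=
    Filter.eventually_of_mem hmem chev
  have hSrg : DifferentiableAt ℝ (fun z => SrL (EuclideanSpace ℂ (Fin n)) (g z)) c :=
    ((SrL (EuclideanSpace ℂ (Fin n))).differentiable.differentiableAt).comp c hD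
  have hDh : DifferentiableAt ℝ (fderiv ℝ h) c :=
    hSrg.congr_of_eventuallyEq hevg
  have hHeq : fderiv ℝ (fderiv ℝ h) c =
      (SrL (EuclideanSpace ℂ (Fin n))).comp (fderiv ℝ g c) := by
    have h1 : fderiv ℝ (fun z => SrL (EuclideanSpace ℂ (Fin n)) (g z)) c =
        (SrL (EuclideanSpace ℂ (Fin n))).comp (fderiv ℝ g c) :=
      ((SrL (EuclideanSpace ℂ (Fin n))).hasFDerivAt.comp c hD.hasFDerivAt).fderiv
    rw [← h1]
    exact Filter.EventuallyEq.fderiv_eq hevg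
  refine ⟨?_, ?_, ?_⟩
  · intro v w
    rw [hHeq]
    simp only [ContinuousLinearMap.coe_comp', Function.comp_apply]
    rw [SrL_apply]
    simp
  · intro v w
    rw [hHeq]
    simp only [ContinuousLinearMap.coe_comp', Function.comp_apply]
    exact SrL_smul_I _ w
  · intro v w
    refine second_derivative_symmetric_of_eventually (f := h) ?_ hDh.hasFDerivAt v w
    exact Filter.eventually_of_mem hmem fun z hz =>
      ((hdiff z hz).restrictScalars ℝ).hasFDerivAt

/-- for `h` holomorphic on an open subset of `ℂⁿ` and `c` a critical
point of `h`, the real Hessian `B` of `Re h` at `c` satisfies `B(iv, iv) = -B(v, v)`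
for all `v`; consequently, if `B` is nondegenerate its signature is zero, i.e. there is
a decomposition `ℝ^{2n} = P ⊕ N` with `B` positive definite on `P`, negative definite
on `N`, and `dim P = dim N`. -/
theorem re_holomorphic_hessian_anti_invariant {n : ℕ}
    {U : Set (EuclideanSpace ℂ (Fin n))} (hU : IsOpen U)
    {h : EuclideanSpace ℂ (Fin n) → ℂ} (hh : DifferentiableOn ℂ h U)
    {c : EuclideanSpace ℂ (Fin n)} (hc : c ∈ U) (hcrit : fderiv ℂ h c = 0) :
    (∀ v : EuclideanSpace ℂ (Fin n),
      fderiv ℝ (fderiv ℝ (fun z => (h z).re)) c (Complex.I • v) (Complex.I • v) =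
        - fderiv ℝ (fderiv ℝ (fun z => (h z).re)) c v v) ∧
    ((∀ v, (∀ w, fderiv ℝ (fderiv ℝ (fun z => (h z).re)) c v w = 0) → v = 0) →
      ∃ P N : Submodule ℝ (EuclideanSpace ℂ (Fin n)), IsCompl P N ∧
        (∀ v ∈ P, v ≠ 0 → 0 < fderiv ℝ (fderiv ℝ (fun z => (h z).re)) c v v) ∧
        (∀ v ∈ N, v ≠ 0 → fderiv ℝ (fderiv ℝ (fun z => (h z).re)) c v v < 0) ∧
        Module.finrank ℝ P = Module.finrank ℝ N) := by
  by_cases hD : DifferentiableAt ℝ (fderiv ℝ (fun z => (h z).re)) c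
  · obtain ⟨hBre, hHlin, hHsymm⟩ := main_analysis hU hh hc hD
    set B := fderiv ℝ (fderiv ℝ (fun z => (h z).re)) c with hB
    set H := fderiv ℝ (fderiv ℝ h) c with hH
    have part1 : ∀ v, B (Complex.I • v) (Complex.I • v) = - B v v := by
      intro v
      rw [hBre, hBre]
      rw [hHlin (Complex.I • v) v, hHsymm (Complex.I • v) v, hHlin v v,
        ← mul_assoc, Complex.I_mul_I]
      simp
    refine ⟨part1, fun hnd => ?_⟩
    haveI : FiniteDimensional ℝ (EuclideanSpace ℂ (Fin n)) :=
      Module.Finite.trans ℂ (EuclideanSpace ℂ (Fin n))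
    set bb : LinearMap.BilinForm ℝ (EuclideanSpace ℂ (Fin n)) :=
      LinearMap.mk₂ ℝ (fun v w => B v w)
        (fun x y z => by simp) (fun r x y => by simp)
        (fun x y z => by simp) (fun r x y => by simp) with hbb
    have hbapp : ∀ v w, bb v w = B v w := fun v w => rfl
    have bsymm : ∀ x y, bb x y = bb y x := by
      intro x y
      rw [hbapp, hbapp, hBre, hBre, hHsymm]
    have hJ : ∀ x, bb (JEquiv (EuclideanSpace ℂ (Fin n)) x)
        (JEquiv (EuclideanSpace ℂ (Fin n)) x) = - bb x x := by
      intro x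
      rw [hbapp, hbapp, JEquiv_apply]
      exact part1 x
    have hnd' : ∀ x, (∀ w, bb x w = 0) → x = 0 := fun x hx => hnd x hx
    obtain ⟨P, N, hcompl, hp, hnn, hr⟩ :=
      signature_zero_of_anti bb bsymm (JEquiv (EuclideanSpace ℂ (Fin n))) hJ hnd'
    exact ⟨P, N, hcompl, hp, hnn, hr⟩
  · have hB0 : fderiv ℝ (fderiv ℝ (fun z => (h z).re)) c = 0 :=
      fderiv_zero_of_not_differentiableAt hD
    constructor
    · intro v; rw [hB0]; simp
    · intro hnd
      have htriv : ∀ v : EuclideanSpace ℂ (Fin n), v = 0 := fun v =>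
        hnd v fun w => by rw [hB0]; simp
      have hbot : (⊥ : Submodule ℝ (EuclideanSpace ℂ (Fin n))) = ⊤ :=
        le_antisymm le_top (fun x _ => by rw [htriv x]; exact Submodule.zero_mem ⊥)
      refine ⟨⊥, ⊥, ⟨disjoint_bot_left, ?_⟩, ?_, ?_, rfl⟩
      · rw [codisjoint_iff, sup_idem, hbot]
      · intro v hv hv0; exact absurd (htriv v) hv0
      · intro v hv hv0; exact absurd (htriv v) hv0
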